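/- For any classifier C : X → Bool, the number of samples not robustly correctly classified by C is at least the cardinality of a maximum matching of the conflict graph. Equivalently, the robust (adversarial) accuracy of any classifier is at most (n − m)/n, where n is the number of samples and m the maximum matching size of the conflict graph. -/

import Mathlib

/-- For any classifier, the number of samples not robustly correctly
classified is at least the size of any matching of the conflict graph (in particular the
maximum matching); equivalently, the robust accuracy is at most `(n - m) / n`. -/
theorem matching_lower_bounds_robust_errors
    {X : Type*} {I : Type*} [Fintype I]
    (y : I → Bool) (S : I → Set X) (hne : ∀ i, (S i).Nonempty)
    (M : Finset (I × I))
    (hedge : ∀ e ∈ M, y e.1 ≠ y e.2 ∧ (S e.1 ∩ S e.2).Nonempty)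
    (hdisj : ∀ e ∈ M, ∀ f ∈ M, e ≠ f →
      e.1 ≠ f.1 ∧ e.1 ≠ f.2 ∧ e.2 ≠ f.1 ∧ e.2 ≠ f.2)
    (C : X → Bool) :
    M.card ≤ Nat.card {i : I | ¬∀ z ∈ S i, C z = y i} ∧
    (Nat.card {i : I | ∀ z ∈ S i, C z = y i} : ℚ) / (Fintype.card I) ≤
      ((Fintype.card I : ℚ) - M.card) / (Fintype.card I) := by
  classical
  set P : I → Prop := fun i => ∀ z ∈ S i, C z = y i with hP
  have key : M.card ≤ (Finset.univ.filter fun i => ¬ P i).card := by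
    apply Finset.card_le_card_of_injOn (fun e => if P e.1 then e.2 else e.1)
    · intro e he
      obtain ⟨hy, z, hz1, hz2⟩ := hedge e he
      simp only [Finset.mem_coe, Finset.mem_filter, Finset.mem_univ, true_and]
      by_cases h1 : P e.1
      · rw [if_pos h1]
        intro h2
        exact hy ((h1 z hz1).symm.trans (h2 z hz2))
      · simp only [if_neg h1]; exact h1
    · intro e he f hf hef
      by_contra hne'
      obtain ⟨h1, h2, h3, h4⟩ := hdisj e he f hf hne'
      dsimp only at hef
      split_ifs at hef <;> simp_all
  have hcard1 : Nat.card {i : I | ¬ P i} = (Finset.univ.filter fun i => ¬ P i).card := by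
    rw [Nat.card_eq_fintype_card, Fintype.card_subtype]; simp only [Set.mem_setOf_eq]
  have hcard2 : Nat.card {i : I | P i} = (Finset.univ.filter fun i => P i).card := by
    rw [Nat.card_eq_fintype_card, Fintype.card_subtype]; simp only [Set.mem_setOf_eq]
  have hsum : (Finset.univ.filter fun i => P i).card +
      (Finset.univ.filter fun i => ¬ P i).card = Fintype.card I := by
    rw [Finset.card_filter_add_card_filter_not, Finset.card_univ]
  refine ⟨by rw [hcard1]; exact key, ?_⟩
  have hnum : (Nat.card {i : I | P i} : ℚ) ≤ (Fintype.card I : ℚ) - M.card := by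
    have : Nat.card {i : I | P i} + M.card ≤ Fintype.card I := by
      rw [hcard2]; omega
    have := (Nat.cast_le (α := ℚ)).2 this
    push_cast at this
    linarith
  exact div_le_div_of_nonneg_right hnum (Nat.cast_nonneg _)
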